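/- Let Ω₁, Ω₂ > 0 and ρ ∈ (0,1), and let f be the bivariate Nakagami-m joint PDF with fading parameter m = 1 (the bivariate Rayleigh PDF). Then for all r₁, r₂ ≥ 0, the joint CDF F(r₁,r₂) = ∫_0^{r₁} ∫_0^{r₂} f(x,y) dy dx equals 1 − exp(−r₁²/Ω₁) · Q₁( √(2/(1−ρ)) · r₂/√Ω₂ , √(2ρ/(1−ρ)) · r₁/√Ω₁ ) − exp(−r₂²/Ω₂) · [ 1 − Q₁( √(2ρ/(1−ρ)) · r₂/√Ω₂ , √(2/(1−ρ)) · r₁/√Ω₁ ) ]. -/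

import Mathlib

open MeasureTheory Real Finset

/-- Modified Bessel function of the first kind of nonnegative integer order. -/
noncomputable def besselI (n : ℕ) (x : ℝ) : ℝ :=
  ∑' k : ℕ, (x / 2) ^ (2 * k + n) / (k.factorial * (k + n).factorial)

/-- Generalized Marcum Q-function of positive integer order `m`. -/
noncomputable def marcumQ (m : ℕ) (a b : ℝ) : ℝ :=
  a ^ (-((m : ℤ) - 1)) *
    ∫ x in Set.Ioi b, x ^ m * Real.exp (-(x ^ 2 + a ^ 2) / 2) * besselI (m - 1) (a * x)

/-- Joint PDF of two correlated Nakagami-`m` random variables with powers `Ω₁, Ω₂`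
and power correlation coefficient `ρ`. -/
noncomputable def nakPDF (m : ℕ) (Ω₁ Ω₂ ρ : ℝ) (r₁ r₂ : ℝ) : ℝ :=
  4 * (m : ℝ) ^ (m + 1) * (r₁ * r₂) ^ m /
      (Real.Gamma m * Ω₁ * Ω₂ * (1 - ρ) * Real.sqrt (Ω₁ * Ω₂ * ρ) ^ (m - 1)) *
    Real.exp (-((m : ℝ) / (1 - ρ)) * (r₁ ^ 2 / Ω₁ + r₂ ^ 2 / Ω₂)) *
    besselI (m - 1) (2 * m * Real.sqrt ρ * r₁ * r₂ / (Real.sqrt (Ω₁ * Ω₂) * (1 - ρ)))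

open Filter

/-- `ee k t = exp (-t) * ∑_{j ≤ k} t^j / j!`, the regularized upper incomplete gamma. -/
noncomputable def ee (k : ℕ) (t : ℝ) : ℝ :=
  Real.exp (-t) * ∑ j ∈ range (k+1), t ^ j / j.factorial

lemma ee_zero (k : ℕ) : ee k 0 = 1 := by
  have : ∀ j ∈ range (k+1), (0:ℝ) ^ j / j.factorial = if j = 0 then 1 else 0 := by
    intro j _; rcases j with _ | j <;> simp [zero_pow]
  simp [ee, Finset.sum_congr rfl this]

lemma ee_nonneg (k : ℕ) {t : ℝ} (ht : 0 ≤ t) : 0 ≤ ee k t := by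
  apply mul_nonneg (Real.exp_nonneg _)
  exact Finset.sum_nonneg fun j _ => by positivity

lemma ee_le_one (k : ℕ) {t : ℝ} (ht : 0 ≤ t) : ee k t ≤ 1 := by
  rw [ee, Real.exp_neg]
  rw [inv_mul_le_iff₀ (Real.exp_pos t), mul_one]
  exact Real.sum_le_exp_of_nonneg ht _

lemma hasDerivAt_ee (k : ℕ) (t : ℝ) :
    HasDerivAt (ee k) (-(Real.exp (-t) * t ^ k / k.factorial)) t := by
  have h1 : HasDerivAt (fun t : ℝ => Real.exp (-t)) (-Real.exp (-t)) t := by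
    simpa using (hasDerivAt_neg t).exp
  have h2 : HasDerivAt (fun t : ℝ => ∑ j ∈ range (k+1), t ^ j / j.factorial)
      (∑ j ∈ range k, t ^ j / j.factorial) t := by
    have : ∀ j ∈ range (k+1), HasDerivAt (fun t : ℝ => t ^ j / j.factorial)
        ((j : ℝ) * t ^ (j-1) / j.factorial) t := fun j _ => by
      simpa [div_eq_mul_inv, mul_comm, mul_assoc, mul_left_comm] using
        (hasDerivAt_pow j t).div_const (j.factorial : ℝ)
    have := HasDerivAt.fun_sum this
    refine this.congr_deriv (Eq.symm ?_)
    rw [Finset.sum_range_succ' (fun j => (j:ℝ) * t ^ (j-1) / j.factorial) k]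
    simp [Nat.factorial_succ]
    apply Finset.sum_congr rfl
    intro j _
    field_simp
  have := h1.mul h2
  refine this.congr_deriv (Eq.symm ?_)
  have : ∑ j ∈ range (k+1), t ^ j / j.factorial
      = t^k / k.factorial + ∑ j ∈ range k, t ^ j / j.factorial := by
    rw [Finset.sum_range_succ]; ring
  rw [this]; ring

/-- Antiderivative fact: `d/dt [-(k! / (2 λ^{k+1})) ee k (λ t²)] = t^{2k+1} exp (-λ t²)`. -/
lemma hasDerivAt_G (k : ℕ) {lam : ℝ} (hlam : 0 < lam) (t : ℝ) :
    HasDerivAt (fun t : ℝ => -((k.factorial : ℝ) / (2 * lam ^ (k+1)) * ee k (lam * t^2)))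
      (t ^ (2*k+1) * Real.exp (-(lam * t^2))) t := by
  have h0 : HasDerivAt (fun t : ℝ => lam * t^2) (lam * (2 * t)) t := by
    simpa using (hasDerivAt_pow 2 t).const_mul lam
  have h1 := ((hasDerivAt_ee k (lam * t^2)).comp t h0).const_mul
      ((k.factorial : ℝ) / (2 * lam ^ (k+1)))
  have := h1.neg
  refine this.congr_deriv (Eq.symm ?_)
  have hk : (k.factorial : ℝ) ≠ 0 := Nat.cast_ne_zero.mpr k.factorial_ne_zero
  field_simp
  ring_nf

lemma tendsto_ee_comp (k : ℕ) {lam : ℝ} (hlam : 0 < lam) :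
    Tendsto (fun t : ℝ => ee k (lam * t^2)) atTop (nhds 0) := by
  have h1 : Tendsto (fun t : ℝ => lam * t^2) atTop atTop := by
    apply Tendsto.const_mul_atTop hlam
    exact tendsto_pow_atTop (by norm_num)
  have h2 : Tendsto (fun y : ℝ => ee k y) atTop (nhds 0) := by
    have : ∀ y : ℝ, ee k y = ∑ j ∈ range (k+1), y ^ j * Real.exp (-y) / j.factorial := by
      intro y; rw [ee, Finset.mul_sum]; apply Finset.sum_congr rfl; intro j _; ring
    simp only [this]
    have : Tendsto (fun y : ℝ => ∑ j ∈ range (k+1), y ^ j * Real.exp (-y) / j.factorial)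
        atTop (nhds (∑ j ∈ range (k+1), (0:ℝ))) := by
      apply tendsto_finset_sum
      intro j _
      simpa using (tendsto_pow_mul_exp_neg_atTop_nhds_zero j).div_const (j.factorial : ℝ)
    simpa using this
  exact h2.comp h1

lemma integral_Ioi_moment (k : ℕ) {lam b : ℝ} (hlam : 0 < lam) (hb : 0 ≤ b) :
    ∫ t in Set.Ioi b, t ^ (2*k+1) * Real.exp (-(lam * t^2)) =
      (k.factorial : ℝ) / (2 * lam^(k+1)) * ee k (lam * b^2) := by
  have hc : ContinuousWithinAt
      (fun t : ℝ => -((k.factorial : ℝ) / (2 * lam ^ (k+1)) * ee k (lam * t^2))) (Set.Ici b) b :=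
    ((hasDerivAt_G k hlam b).continuousAt).continuousWithinAt
  have hT : Tendsto (fun t : ℝ => -((k.factorial : ℝ) / (2 * lam ^ (k+1)) * ee k (lam * t^2)))
      atTop (nhds 0) := by
    simpa using ((tendsto_ee_comp k hlam).const_mul ((k.factorial : ℝ) / (2 * lam ^ (k+1)))).neg
  have hpos : ∀ t ∈ Set.Ioi b, 0 ≤ t ^ (2*k+1) * Real.exp (-(lam * t^2)) := by
    intro t ht
    have : (0:ℝ) ≤ t := le_trans hb (le_of_lt ht)
    positivity
  rw [integral_Ioi_of_hasDerivAt_of_nonneg hc (fun t _ => hasDerivAt_G k hlam t) hpos hT]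
  ring

lemma integrableOn_Ioi_moment (k : ℕ) {lam b : ℝ} (hlam : 0 < lam) (hb : 0 ≤ b) :
    IntegrableOn (fun t => t ^ (2*k+1) * Real.exp (-(lam * t^2))) (Set.Ioi b) := by
  have hc : ContinuousWithinAt
      (fun t : ℝ => -((k.factorial : ℝ) / (2 * lam ^ (k+1)) * ee k (lam * t^2))) (Set.Ici b) b :=
    ((hasDerivAt_G k hlam b).continuousAt).continuousWithinAt
  have hT : Tendsto (fun t : ℝ => -((k.factorial : ℝ) / (2 * lam ^ (k+1)) * ee k (lam * t^2)))
      atTop (nhds 0) := by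
    simpa using ((tendsto_ee_comp k hlam).const_mul ((k.factorial : ℝ) / (2 * lam ^ (k+1)))).neg
  have hpos : ∀ t ∈ Set.Ioi b, 0 ≤ t ^ (2*k+1) * Real.exp (-(lam * t^2)) := by
    intro t ht
    have : (0:ℝ) ≤ t := le_trans hb (le_of_lt ht)
    positivity
  exact integrableOn_Ioi_deriv_of_nonneg hc (fun t _ => hasDerivAt_G k hlam t) hpos hT

lemma integral_interval_moment (k : ℕ) {lam w : ℝ} (hlam : 0 < lam) (hw : 0 ≤ w) :
    ∫ t in (0:ℝ)..w, t ^ (2*k+1) * Real.exp (-(lam * t^2)) =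
      (k.factorial : ℝ) / (2 * lam^(k+1)) * (1 - ee k (lam * w^2)) := by
  have hint : IntervalIntegrable (fun t => t ^ (2*k+1) * Real.exp (-(lam * t^2))) volume 0 w := by
    apply Continuous.intervalIntegrable
    continuity
  rw [intervalIntegral.integral_eq_sub_of_hasDerivAt (fun t _ => hasDerivAt_G k hlam t) hint]
  simp [ee_zero]
  ring

section interchange
variable {c : ℕ → ℝ} {lam : ℝ}

lemma moment_nonneg (k : ℕ) {x : ℝ} (hx : 0 ≤ x) :
    0 ≤ x ^ (2*k+1) * Real.exp (-(lam * x^2)) := by positivity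

/-- generic interchange on `Ioi b` -/
lemma integral_Ioi_series (hc : ∀ k, 0 ≤ c k) (hlam : 0 < lam) {b : ℝ} (hb : 0 ≤ b)
    (hsum : Summable fun k => c k * ((k.factorial : ℝ) / (2 * lam^(k+1)))) :
    ∫ x in Set.Ioi b, ∑' k, c k * (x ^ (2*k+1) * Real.exp (-(lam * x^2)))
      = ∑' k, c k * ((k.factorial : ℝ) / (2 * lam^(k+1)) * ee k (lam * b^2)) := by
  have hmeas : ∀ k : ℕ, AEStronglyMeasurable
      (fun x : ℝ => c k * (x ^ (2*k+1) * Real.exp (-(lam * x^2))))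
      (volume.restrict (Set.Ioi b)) := by
    intro k; exact (Continuous.aestronglyMeasurable (by continuity))
  have hint : ∀ k : ℕ, IntegrableOn
      (fun x : ℝ => c k * (x ^ (2*k+1) * Real.exp (-(lam * x^2)))) (Set.Ioi b) :=
    fun k => (integrableOn_Ioi_moment k hlam hb).const_mul (c k)
  have hval : ∀ k : ℕ, ∫ x in Set.Ioi b, c k * (x ^ (2*k+1) * Real.exp (-(lam * x^2)))
      = c k * ((k.factorial : ℝ) / (2 * lam^(k+1)) * ee k (lam * b^2)) := by
    intro k
    rw [integral_const_mul, integral_Ioi_moment k hlam hb]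
  have hee0 : 0 ≤ lam * b^2 := by positivity
  have hlin : ∀ k : ℕ, (∫⁻ x in Set.Ioi b, ‖c k * (x ^ (2*k+1) * Real.exp (-(lam * x^2)))‖ₑ)
      = ENNReal.ofReal (c k * ((k.factorial : ℝ) / (2 * lam^(k+1)) * ee k (lam * b^2))) := by
    intro k
    have e1 : (∫⁻ x in Set.Ioi b, ‖c k * (x ^ (2*k+1) * Real.exp (-(lam * x^2)))‖ₑ)
        = ∫⁻ x in Set.Ioi b, ENNReal.ofReal (c k * (x ^ (2*k+1) * Real.exp (-(lam * x^2)))) := by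
      apply lintegral_congr_ae
      filter_upwards [self_mem_ae_restrict measurableSet_Ioi] with x hx
      have hx0 : (0:ℝ) ≤ x := le_trans hb (le_of_lt hx)
      exact Real.enorm_eq_ofReal (mul_nonneg (hc k) (moment_nonneg k hx0))
    rw [e1, ← hval k, ofReal_integral_eq_lintegral_ofReal (hint k)]
    filter_upwards [self_mem_ae_restrict measurableSet_Ioi] with x hx
    have hx0 : (0:ℝ) ≤ x := le_trans hb (le_of_lt hx)
    exact mul_nonneg (hc k) (moment_nonneg k hx0)
  rw [MeasureTheory.integral_tsum hmeas, tsum_congr hval]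
  rw [funext hlin]
  have hDle : ∀ k : ℕ, c k * ((k.factorial : ℝ) / (2 * lam^(k+1)) * ee k (lam * b^2))
      ≤ c k * ((k.factorial : ℝ) / (2 * lam^(k+1))) := by
    intro k
    apply mul_le_mul_of_nonneg_left _ (hc k)
    calc (k.factorial : ℝ) / (2 * lam^(k+1)) * ee k (lam * b^2)
        ≤ (k.factorial : ℝ) / (2 * lam^(k+1)) * 1 := by
          apply mul_le_mul_of_nonneg_left (ee_le_one k hee0) (by positivity)
      _ = _ := mul_one _
  apply ne_top_of_le_ne_top (ENNReal.ofReal_ne_top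
    (r := ∑' k, c k * ((k.factorial : ℝ) / (2 * lam^(k+1)))))
  rw [ENNReal.ofReal_tsum_of_nonneg (fun k => mul_nonneg (hc k) (by positivity)) hsum]
  exact ENNReal.tsum_le_tsum fun k => ENNReal.ofReal_le_ofReal (hDle k)

/-- generic interchange on `0..w` -/
lemma integral_interval_series (hc : ∀ k, 0 ≤ c k) (hlam : 0 < lam) {w : ℝ} (hw : 0 ≤ w)
    (hsum : Summable fun k => c k * ((k.factorial : ℝ) / (2 * lam^(k+1)))) :
    ∫ x in (0:ℝ)..w, ∑' k, c k * (x ^ (2*k+1) * Real.exp (-(lam * x^2)))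
      = ∑' k, c k * ((k.factorial : ℝ) / (2 * lam^(k+1)) * (1 - ee k (lam * w^2))) := by
  have hmeas : ∀ k : ℕ, AEStronglyMeasurable
      (fun x : ℝ => c k * (x ^ (2*k+1) * Real.exp (-(lam * x^2))))
      (volume.restrict (Set.Ioc 0 w)) := by
    intro k; exact (Continuous.aestronglyMeasurable (by continuity))
  have hint : ∀ k : ℕ, IntegrableOn
      (fun x : ℝ => c k * (x ^ (2*k+1) * Real.exp (-(lam * x^2)))) (Set.Ioc 0 w) := by
    intro k
    apply Continuous.integrableOn_Ioc
    continuity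
  have hval : ∀ k : ℕ, ∫ x in Set.Ioc 0 w, c k * (x ^ (2*k+1) * Real.exp (-(lam * x^2)))
      = c k * ((k.factorial : ℝ) / (2 * lam^(k+1)) * (1 - ee k (lam * w^2))) := by
    intro k
    rw [← intervalIntegral.integral_of_le hw, intervalIntegral.integral_const_mul,
      integral_interval_moment k hlam hw]
  have hee0 : 0 ≤ lam * w^2 := by positivity
  rw [intervalIntegral.integral_of_le hw]
  have hvalset := fun k => (intervalIntegral.integral_of_le hw (f := fun x =>
    c k * (x ^ (2*k+1) * Real.exp (-(lam * x^2))))).symm.trans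
    ((intervalIntegral.integral_const_mul _ _).trans
      (by rw [integral_interval_moment k hlam hw]))
  have hlin : ∀ k : ℕ, (∫⁻ x in Set.Ioc 0 w, ‖c k * (x ^ (2*k+1) * Real.exp (-(lam * x^2)))‖ₑ)
      = ENNReal.ofReal (c k * ((k.factorial : ℝ) / (2 * lam^(k+1)) * (1 - ee k (lam * w^2)))) := by
    intro k
    have e1 : (∫⁻ x in Set.Ioc 0 w, ‖c k * (x ^ (2*k+1) * Real.exp (-(lam * x^2)))‖ₑ)
        = ∫⁻ x in Set.Ioc 0 w, ENNReal.ofReal (c k * (x ^ (2*k+1) * Real.exp (-(lam * x^2)))) := by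
      apply lintegral_congr_ae
      filter_upwards [self_mem_ae_restrict measurableSet_Ioc] with x hx
      exact Real.enorm_eq_ofReal (mul_nonneg (hc k) (moment_nonneg k (le_of_lt hx.1)))
    rw [e1, ← hvalset k, ofReal_integral_eq_lintegral_ofReal (hint k)]
    filter_upwards [self_mem_ae_restrict measurableSet_Ioc] with x hx
    exact mul_nonneg (hc k) (moment_nonneg k (le_of_lt hx.1))
  rw [MeasureTheory.integral_tsum hmeas, tsum_congr hvalset]
  rw [funext hlin]
  have hDle : ∀ k : ℕ, c k * ((k.factorial : ℝ) / (2 * lam^(k+1)) * (1 - ee k (lam * w^2)))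
      ≤ c k * ((k.factorial : ℝ) / (2 * lam^(k+1))) := by
    intro k
    apply mul_le_mul_of_nonneg_left _ (hc k)
    calc (k.factorial : ℝ) / (2 * lam^(k+1)) * (1 - ee k (lam * w^2))
        ≤ (k.factorial : ℝ) / (2 * lam^(k+1)) * 1 := by
          apply mul_le_mul_of_nonneg_left _ (by positivity)
          have := ee_nonneg k hee0; linarith
      _ = _ := mul_one _
  apply ne_top_of_le_ne_top (ENNReal.ofReal_ne_top
    (r := ∑' k, c k * ((k.factorial : ℝ) / (2 * lam^(k+1)))))
  rw [ENNReal.ofReal_tsum_of_nonneg (fun k => mul_nonneg (hc k) (by positivity)) hsum]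
  exact ENNReal.tsum_le_tsum fun k => ENNReal.ofReal_le_ofReal (hDle k)

lemma besselI_zero (z : ℝ) :
    besselI 0 z = ∑' k : ℕ, ((z/2)^2) ^ k / (k.factorial * k.factorial) := by
  rw [besselI]
  exact tsum_congr fun k => by rw [← pow_mul]; norm_num

lemma marcumQ_one_series {a b : ℝ} (ha : 0 ≤ a) (hb : 0 ≤ b) :
    marcumQ 1 a b = ∑' k : ℕ, Real.exp (-(a^2/2)) * ((a^2/2)^k / k.factorial) * ee k (b^2/2) := by
  have hk2 : ∀ k : ℕ, ((k.factorial : ℝ)) ≠ 0 := fun k => Nat.cast_ne_zero.mpr k.factorial_ne_zero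
  set c : ℕ → ℝ := fun k => Real.exp (-(a^2)/2) * ((a^2/4)^k / (k.factorial * k.factorial))
    with hcdef
  have hpt : ∀ x : ℝ, x ^ 1 * Real.exp (-(x^2 + a^2)/2) * besselI 0 (a * x)
      = ∑' k, c k * (x ^ (2*k+1) * Real.exp (-((1/2 : ℝ) * x^2))) := by
    intro x
    rw [besselI_zero, ← tsum_mul_left]
    apply tsum_congr
    intro k
    have e1 : ((a*x/2)^2)^k = (a^2/4)^k * (x^2)^k := by
      rw [← mul_pow]; congr 1; ring
    have e2 : Real.exp (-(x^2 + a^2)/2) = Real.exp (-((1/2 : ℝ) * x^2)) * Real.exp (-(a^2)/2) := by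
      rw [← Real.exp_add]; congr 1; ring
    rw [e1, e2, hcdef]
    simp only [pow_mul]
    ring
  have hc : ∀ k, 0 ≤ c k := fun k => by rw [hcdef]; positivity
  have hsum : Summable fun k => c k * ((k.factorial : ℝ) / (2 * (1/2 : ℝ)^(k+1))) := by
    have : (fun k => c k * ((k.factorial : ℝ) / (2 * (1/2 : ℝ)^(k+1))))
        = fun k => Real.exp (-(a^2)/2) * ((a^2/2)^k / k.factorial) := by
      funext k
      rw [hcdef]
      have : ((a:ℝ)^2/2)^k = (a^2/4)^k * 2^k := by rw [← mul_pow]; congr 1; ring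
      rw [this]
      have h2 : ((1:ℝ)/2)^(k+1) = 1/2^(k+1) := by rw [div_pow]; norm_num
      rw [h2]
      field_simp
      ring
    rw [this]
    exact (Real.summable_pow_div_factorial (a^2/2)).mul_left _
  have := integral_Ioi_series hc (by norm_num : (0:ℝ) < 1/2) hb hsum
  rw [marcumQ,
    show (-(((1:ℕ):ℤ) - 1)) = 0 by norm_num, zpow_zero, one_mul,
    show (1-1 : ℕ) = 0 from rfl,
    show (fun x : ℝ => x ^ 1 * Real.exp (-(x^2+a^2)/2) * besselI 0 (a*x))
      = fun x => ∑' k, c k * (x ^ (2*k+1) * Real.exp (-((1/2:ℝ) * x^2))) from funext hpt,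
    this]
  apply tsum_congr
  intro k
  have h2 : ((1:ℝ)/2)^(k+1) = 1/2^(k+1) := by rw [div_pow]; norm_num
  have e3 : ((a:ℝ)^2/2)^k = (a^2/4)^k * 2^k := by rw [← mul_pow]; congr 1; ring
  have e4 : (1/2 : ℝ) * b^2 = b^2/2 := by ring
  rw [hcdef, e4]
  simp only [e3, h2]
  have : Real.exp (-(a^2)/2) = Real.exp (-(a^2/2)) := by rw [neg_div]
  rw [this]
  field_simp
  ring

theorem double_integral_series (Ω₁ Ω₂ : ℝ) (hΩ₁ : 0 < Ω₁) (hΩ₂ : 0 < Ω₂)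
    (ρ : ℝ) (hρ : ρ ∈ Set.Ioo (0 : ℝ) 1) (r₁ r₂ : ℝ) (h₁ : 0 ≤ r₁) (h₂ : 0 ≤ r₂) :
    (∫ x in (0:ℝ)..r₁, ∫ y in (0:ℝ)..r₂, nakPDF 1 Ω₁ Ω₂ ρ x y) =
      ∑' k, (1 - ρ) * ρ^k *
        ((1 - ee k (1/((1-ρ)*Ω₁) * r₁^2)) * (1 - ee k (1/((1-ρ)*Ω₂) * r₂^2))) := by
  obtain ⟨hρ0, hρ1⟩ := hρ
  have h1ρ : 0 < 1 - ρ := by linarith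
  set lam₁ : ℝ := 1/((1-ρ)*Ω₁) with hlam₁def
  set lam₂ : ℝ := 1/((1-ρ)*Ω₂) with hlam₂def
  have hlam₁ : 0 < lam₁ := by rw [hlam₁def]; positivity
  have hlam₂ : 0 < lam₂ := by rw [hlam₂def]; positivity
  set A : ℝ := 4/(Ω₁*Ω₂*(1-ρ)) with hAdef
  set R : ℝ := ρ/(Ω₁*Ω₂*(1-ρ)^2) with hRdef
  have hA0 : 0 ≤ A := by rw [hAdef]; positivity
  have hR0 : 0 ≤ R := by rw [hRdef]; positivity
  have hΩ₁' : Ω₁ ≠ 0 := ne_of_gt hΩ₁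
  have hΩ₂' : Ω₂ ≠ 0 := ne_of_gt hΩ₂
  have h1ρ' : (1:ℝ) - ρ ≠ 0 := ne_of_gt h1ρ
  have hsq : Real.sqrt (Ω₁*Ω₂) ^ 2 = Ω₁*Ω₂ := Real.sq_sqrt (by positivity)
  have hsqρ : Real.sqrt ρ ^ 2 = ρ := Real.sq_sqrt hρ0.le
  have hsqne : Real.sqrt (Ω₁*Ω₂) ≠ 0 := by
    refine ne_of_gt (Real.sqrt_pos.mpr (by positivity))
  have hfac : ∀ k : ℕ, ((k.factorial : ℝ)) ≠ 0 := fun k => Nat.cast_ne_zero.mpr k.factorial_ne_zero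
  set d : ℕ → ℝ → ℝ := fun k x => A * (R^k/(k.factorial*k.factorial))
    * (x^(2*k+1) * Real.exp (-(lam₁ * x^2))) with hddef
  -- Step 1: pointwise series representation of nakPDF
  have nak_eq : ∀ x y : ℝ, nakPDF 1 Ω₁ Ω₂ ρ x y
      = ∑' k, d k x * (y^(2*k+1) * Real.exp (-(lam₂ * y^2))) := by
    intro x y
    rw [nakPDF]
    simp only [Nat.cast_one, pow_one, Real.Gamma_one, one_mul, mul_one,
      show (1-1 : ℕ) = 0 from rfl, pow_zero, one_pow]
    rw [besselI_zero, ← tsum_mul_left]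
    apply tsum_congr
    intro k
    have harg : ((2 * Real.sqrt ρ * x * y / (Real.sqrt (Ω₁ * Ω₂) * (1 - ρ)))/2)^2
        = R * (x^2 * y^2) := by
      rw [div_pow, div_pow, mul_pow, mul_pow, mul_pow, mul_pow, hsq, hsqρ, hRdef]
      field_simp
    have hexp : Real.exp (-((1:ℝ) / (1 - ρ)) * (x ^ 2 / Ω₁ + y ^ 2 / Ω₂))
        = Real.exp (-(lam₁ * x^2)) * Real.exp (-(lam₂ * y^2)) := by
      rw [← Real.exp_add]
      congr 1
      rw [hlam₁def, hlam₂def]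
      field_simp
      ring
    rw [harg, hexp, hddef, hAdef]
    have : (R * (x^2*y^2))^k = R^k * (x^2)^k * (y^2)^k := by
      rw [mul_pow, mul_pow]; ring
    rw [this]
    simp only [pow_succ, pow_mul]
    field_simp
  -- Step 2: inner integral for x ≥ 0
  set C2 : ℕ → ℝ := fun k => (k.factorial : ℝ) / (2 * lam₂^(k+1)) * (1 - ee k (lam₂ * r₂^2))
    with hC2def
  have hC2nonneg : ∀ k, 0 ≤ C2 k := by
    intro k
    rw [hC2def]
    have h1 : 0 ≤ 1 - ee k (lam₂ * r₂^2) := by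
      have := ee_le_one k (t := lam₂ * r₂^2) (by positivity); linarith
    positivity
  have inner_eq : ∀ x : ℝ, 0 ≤ x →
      (∫ y in (0:ℝ)..r₂, nakPDF 1 Ω₁ Ω₂ ρ x y) = ∑' k, d k x * C2 k := by
    intro x hx
    have hc : ∀ k, 0 ≤ d k x := by
      intro k; rw [hddef]; positivity
    have hsum : Summable fun k =>
        d k x * ((k.factorial : ℝ) / (2 * lam₂^(k+1))) := by
      have heq : (fun k => d k x * ((k.factorial : ℝ) / (2 * lam₂^(k+1))))
          = fun k => (A * x * Real.exp (-(lam₁*x^2)) / (2*lam₂)) * ((R*x^2/lam₂)^k / k.factorial) := by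
        funext k
        rw [hddef]
        have e1 : (R*x^2/lam₂)^k = R^k * (x^2)^k / lam₂^k := by
          rw [div_pow, mul_pow]
        rw [e1]
        simp only [pow_succ, pow_mul]
        field_simp
      rw [heq]
      exact (Real.summable_pow_div_factorial _).mul_left _
    have := integral_interval_series hc hlam₂ h₂ hsum
    rw [show (fun y : ℝ => nakPDF 1 Ω₁ Ω₂ ρ x y)
      = fun y => ∑' k, d k x * (y^(2*k+1) * Real.exp (-(lam₂ * y^2))) from funext (nak_eq x), this]
  -- Step 3: outer integrand as series in x
  set c' : ℕ → ℝ := fun k => A * (R^k/(k.factorial*k.factorial)) * C2 k with hc'def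
  have hout : ∀ x : ℝ, (∑' k, d k x * C2 k)
      = ∑' k, c' k * (x^(2*k+1) * Real.exp (-(lam₁ * x^2))) := by
    intro x
    apply tsum_congr
    intro k
    rw [hddef, hc'def]
    ring
  -- key per-k constant identity
  have hepk : ∀ k : ℕ, c' k * ((k.factorial : ℝ) / (2 * lam₁^(k+1)))
      = (1-ρ) * ρ^k * (1 - ee k (lam₂ * r₂^2)) := by
    intro k
    simp only [hc'def, hC2def, hAdef, hRdef]
    have e1 : (ρ/(Ω₁*Ω₂*(1-ρ)^2))^k = ρ^k / (Ω₁^k * Ω₂^k * ((1-ρ)^2)^k) := by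
      rw [div_pow, mul_pow, mul_pow]
    have e2 : lam₁^(k+1) = 1/(((1-ρ)*Ω₁)^(k+1)) := by rw [hlam₁def, div_pow, one_pow]
    have e3 : lam₂^(k+1) = 1/(((1-ρ)*Ω₂)^(k+1)) := by rw [hlam₂def, div_pow, one_pow]
    rw [e1, e2, e3]
    have hne1 : ((1-ρ)*Ω₁)^(k+1) ≠ 0 := by positivity
    have hne2 : ((1-ρ)*Ω₂)^(k+1) ≠ 0 := by positivity
    have e4 : ((1-ρ)*Ω₁)^(k+1) = (1-ρ)^k * (1-ρ) * (Ω₁^k * Ω₁) := by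
      rw [mul_pow]; ring
    have e5 : ((1-ρ)*Ω₂)^(k+1) = (1-ρ)^k * (1-ρ) * (Ω₂^k * Ω₂) := by
      rw [mul_pow]; ring
    have e6 : ((1-ρ)^2)^k = (1-ρ)^k * (1-ρ)^k := by rw [← pow_mul, two_mul, pow_add]
    rw [e4, e5, e6]
    field_simp
    ring
  have hsum' : Summable fun k => c' k * ((k.factorial : ℝ) / (2 * lam₁^(k+1))) := by
    rw [funext hepk]
    apply Summable.of_nonneg_of_le
    · intro k
      have h1 : 0 ≤ 1 - ee k (lam₂ * r₂^2) := by
        have := ee_le_one k (t := lam₂ * r₂^2) (by positivity); linarith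
      positivity
    · intro k
      show (1-ρ) * ρ^k * (1 - ee k (lam₂ * r₂^2)) ≤ (1-ρ) * ρ^k
      have h1 := ee_nonneg k (t := lam₂ * r₂^2) (by positivity)
      calc (1-ρ) * ρ^k * (1 - ee k (lam₂ * r₂^2)) ≤ (1-ρ) * ρ^k * 1 :=
            mul_le_mul_of_nonneg_left (by linarith) (by positivity)
        _ = (1-ρ) * ρ^k := mul_one _
    · exact (summable_geometric_of_lt_one hρ0.le hρ1).mul_left _
  have hc' : ∀ k, 0 ≤ c' k := by
    intro k
    rw [hc'def]
    exact mul_nonneg (mul_nonneg hA0 (by positivity)) (hC2nonneg k)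
  -- Step 4: assemble
  have houter : (∫ x in (0:ℝ)..r₁, ∫ y in (0:ℝ)..r₂, nakPDF 1 Ω₁ Ω₂ ρ x y)
      = ∫ x in (0:ℝ)..r₁, ∑' k, c' k * (x^(2*k+1) * Real.exp (-(lam₁ * x^2))) := by
    apply intervalIntegral.integral_congr
    intro x hx
    rw [Set.uIcc_of_le h₁] at hx
    show (∫ y in (0:ℝ)..r₂, nakPDF 1 Ω₁ Ω₂ ρ x y) = _
    rw [inner_eq x hx.1, hout x]
  rw [houter, integral_interval_series hc' hlam₁ h₁ hsum']
  apply tsum_congr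
  intro k
  rw [← mul_assoc, hepk k]
  ring

lemma exp_tsum (t : ℝ) : Real.exp t = ∑' k : ℕ, t^k / k.factorial := by
  rw [Real.exp_eq_exp_ℝ, NormedSpace.exp_eq_tsum_div]

/-- geometric tail -/
lemma geom_tail {ρ : ℝ} (hρ0 : 0 ≤ ρ) (hρ1 : ρ < 1) (c : ℝ) (m : ℕ) :
    ∑' k : ℕ, (if m ≤ k then ρ^k * c else 0) = ρ^m * c / (1-ρ) := by
  have hinj : Function.Injective (fun n : ℕ => m + n) := fun a b h => by
    simp only at h; omega
  have hsupp : Function.support (fun k : ℕ => if m ≤ k then ρ^k*c else 0)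
      ⊆ Set.range (fun n : ℕ => m + n) := by
    intro k hk
    simp only [Function.mem_support] at hk
    by_cases h : m ≤ k
    · exact ⟨k - m, by simp only []; omega⟩
    · simp [h] at hk
  rw [← Function.Injective.tsum_eq hinj hsupp]
  have hpt : ∀ n : ℕ, (if m ≤ m + n then ρ^(m+n)*c else 0) = ρ^m * (ρ^n * c) := by
    intro n
    rw [if_pos (Nat.le_add_right m n), pow_add]
    ring
  rw [tsum_congr hpt, tsum_mul_left, tsum_mul_right, tsum_geometric_of_lt_one hρ0 hρ1]
  ring

lemma summable_geom_tail {ρ : ℝ} (hρ0 : 0 ≤ ρ) (hρ1 : ρ < 1) (c : ℝ) (hc : 0 ≤ c) (m : ℕ) :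
    Summable (fun k : ℕ => if m ≤ k then ρ^k * c else 0) := by
  apply Summable.of_nonneg_of_le (fun k => by positivity)
    (fun k => ?_) ((summable_geometric_of_lt_one hρ0 hρ1).mul_right c)
  by_cases h : m ≤ k
  · rw [if_pos h]
  · rw [if_neg h]; positivity

/-- shape-2 swap: `∑ₖ g k * ee k ν` as a double sum. -/
lemma shape2 {g : ℕ → ℝ} (hg : ∀ k, 0 ≤ g k) (hgs : Summable g) {ν : ℝ} (hν : 0 ≤ ν) :
    ∑' k, g k * ee k ν
      = Real.exp (-ν) * ∑' p : ℕ×ℕ,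
          (if p.1 ≤ p.2 then ν^p.1/p.1.factorial * g p.2 else 0) := by
  set F : ℕ×ℕ → ℝ := fun q => if q.2 ≤ q.1 then ν^q.2/q.2.factorial * g q.1 else 0 with hFdef
  have hrow : ∀ k : ℕ, ∑' i, F (k, i) = ∑ i ∈ range (k+1), ν^i/i.factorial * g k := by
    intro k
    rw [tsum_eq_sum (s := range (k+1)) (fun i hi => by
      simp only [hFdef]; simp only [Finset.mem_range] at hi; exact if_neg (by omega))]
    exact Finset.sum_congr rfl fun i hi => by
      simp only [hFdef]; simp only [Finset.mem_range] at hi; exact if_pos (by omega)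
  have hpt : ∀ k : ℕ, g k * ee k ν = Real.exp (-ν) * ∑' i, F (k, i) := by
    intro k
    rw [hrow, ee, Finset.mul_sum, Finset.mul_sum, Finset.mul_sum]
    exact Finset.sum_congr rfl fun i _ => by ring
  have hF0 : ∀ q : ℕ×ℕ, 0 ≤ F q := by
    intro q
    simp only [hFdef]
    by_cases h : q.2 ≤ q.1
    · rw [if_pos h]; exact mul_nonneg (by positivity) (hg _)
    · rw [if_neg h]
  have hFsum : Summable F := by
    apply (summable_prod_of_nonneg hF0).mpr
    constructor
    · intro k
      exact summable_of_ne_finset_zero (s := range (k+1)) (fun i hi => by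
        simp only [hFdef]; simp only [Finset.mem_range] at hi; exact if_neg (by omega))
    · apply Summable.of_nonneg_of_le (fun k => tsum_nonneg (fun i => hF0 _))
        (fun k => ?_) (hgs.mul_left (Real.exp ν))
      rw [hrow, ← Finset.sum_mul]
      exact mul_le_mul_of_nonneg_right (Real.sum_le_exp_of_nonneg hν _) (hg k)
  rw [tsum_congr hpt, tsum_mul_left]
  congr 1
  rw [← Summable.tsum_prod' hFsum (fun k => (hFsum.prod_factor k))]
  exact ((Equiv.prodComm ℕ ℕ).tsum_eq F).symm

lemma sum_geom_ee {ρ : ℝ} (hρ0 : 0 ≤ ρ) (hρ1 : ρ < 1) {t : ℝ} (ht : 0 ≤ t) :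
    ∑' k, ρ^k * ee k t = Real.exp (-((1-ρ)*t)) * (1-ρ)⁻¹ := by
  rw [shape2 (fun k => by positivity) (summable_geometric_of_lt_one hρ0 hρ1) ht]
  have hsum : Summable (fun p : ℕ×ℕ => if p.1 ≤ p.2 then t^p.1/p.1.factorial * ρ^p.2 else 0) := by
    apply Summable.of_nonneg_of_le (fun p => by positivity) (fun p => ?_)
      ((Real.summable_pow_div_factorial t).mul_of_nonneg
        (summable_geometric_of_lt_one hρ0 hρ1)
        (fun k => by positivity) (fun k => by positivity))
    by_cases h : p.1 ≤ p.2
    · rw [if_pos h]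
    · rw [if_neg h]; positivity
  rw [Summable.tsum_prod' hsum (fun i => hsum.prod_factor i)]
  have hin : ∀ i : ℕ, (∑' j, if i ≤ j then t^i/i.factorial * ρ^j else 0)
      = (ρ*t)^i/i.factorial * (1-ρ)⁻¹ := by
    intro i
    have : ∀ j : ℕ, (if i ≤ j then t^i/i.factorial * ρ^j else 0)
        = (if i ≤ j then ρ^j * (t^i/i.factorial) else 0) := by
      intro j; by_cases h : i ≤ j <;> simp [h] <;> ring
    rw [tsum_congr this, geom_tail hρ0 hρ1 _ i, mul_pow]
    field_simp
  rw [tsum_congr hin, tsum_mul_right, ← exp_tsum, ← mul_assoc, ← Real.exp_add]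
  congr 2
  ring

lemma shape3 {ρ : ℝ} (hρ0 : 0 ≤ ρ) (hρ1 : ρ < 1) {t u : ℝ} (ht : 0 ≤ t) (hu : 0 ≤ u) :
    ∑' k, ρ^k * (ee k t * ee k u)
      = Real.exp (-t) * Real.exp (-u) * (1-ρ)⁻¹ *
          ∑' p : ℕ×ℕ, ρ^(max p.1 p.2) * (t^p.1/p.1.factorial * (u^p.2/p.2.factorial)) := by
  set H : ℕ × (ℕ×ℕ) → ℝ := fun q =>
    if max q.2.1 q.2.2 ≤ q.1 then ρ^q.1 * (t^q.2.1/q.2.1.factorial * (u^q.2.2/q.2.2.factorial))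
    else 0 with hHdef
  have hH0 : ∀ q, 0 ≤ H q := by
    intro q
    simp only [hHdef]
    by_cases h : max q.2.1 q.2.2 ≤ q.1
    · rw [if_pos h]; positivity
    · rw [if_neg h]
  have hrow : ∀ k : ℕ, ∑' p : ℕ×ℕ, H (k, p)
      = ρ^k * ((∑ i ∈ range (k+1), t^i/i.factorial) * (∑ j ∈ range (k+1), u^j/j.factorial)) := by
    intro k
    rw [tsum_eq_sum (s := (range (k+1)) ×ˢ (range (k+1))) (fun p hp => by
      simp only [hHdef]
      simp only [Finset.mem_product, Finset.mem_range] at hp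
      exact if_neg (by omega))]
    rw [Finset.sum_mul_sum, Finset.mul_sum]
    rw [Finset.sum_product]
    apply Finset.sum_congr rfl
    intro i hi
    rw [Finset.mul_sum]
    apply Finset.sum_congr rfl
    intro j hj
    simp only [Finset.mem_range] at hi hj
    simp only [hHdef]
    rw [if_pos (by simp; omega)]
  have hpt : ∀ k : ℕ, ρ^k * (ee k t * ee k u)
      = Real.exp (-t) * Real.exp (-u) * ∑' p : ℕ×ℕ, H (k, p) := by
    intro k
    rw [hrow, ee, ee]
    ring
  have hHsum : Summable H := by
    apply (summable_prod_of_nonneg hH0).mpr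
    refine ⟨fun k => ?_, ?_⟩
    · exact summable_of_ne_finset_zero (s := (range (k+1)) ×ˢ (range (k+1))) (fun p hp => by
        simp only [hHdef]
        simp only [Finset.mem_product, Finset.mem_range] at hp
        exact if_neg (by omega))
    · apply Summable.of_nonneg_of_le (fun k => tsum_nonneg (fun p => hH0 _)) (fun k => ?_)
        (((summable_geometric_of_lt_one hρ0 hρ1)).mul_right (Real.exp t * Real.exp u))
      rw [hrow]
      apply mul_le_mul_of_nonneg_left _ (by positivity)
      apply mul_le_mul (Real.sum_le_exp_of_nonneg ht _) (Real.sum_le_exp_of_nonneg hu _)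
        (Finset.sum_nonneg fun j _ => by positivity) (Real.exp_nonneg t)
  rw [tsum_congr hpt, tsum_mul_left]
  have hcol : ∀ p : ℕ×ℕ, (fun k : ℕ => H (k, p))
      = fun k : ℕ => if max p.1 p.2 ≤ k
          then ρ^k * (t^p.1/p.1.factorial * (u^p.2/p.2.factorial)) else 0 := by
    intro p; funext k; simp only [hHdef]
  have hcomm : ∑' (k : ℕ) (p : ℕ×ℕ), H (k, p) = ∑' (p : ℕ×ℕ) (k : ℕ), H (k, p) := by
    refine (Summable.tsum_comm' (f := fun (k : ℕ) (p : ℕ×ℕ) => H (k, p)) hHsum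
      (fun k => hHsum.prod_factor k) (fun p => ?_)).symm
    rw [hcol p]
    exact summable_geom_tail hρ0 hρ1 _ (by positivity) (max p.1 p.2)
  rw [hcomm]
  have hinner : ∀ p : ℕ×ℕ, ∑' (k : ℕ), H (k, p)
      = (1-ρ)⁻¹ * (ρ^(max p.1 p.2) * (t^p.1/p.1.factorial * (u^p.2/p.2.factorial))) := by
    intro p
    rw [show (∑' (k : ℕ), H (k, p)) = _ from congrArg tsum (hcol p),
      geom_tail hρ0 hρ1 _ (max p.1 p.2)]
    field_simp
  rw [tsum_congr hinner, tsum_mul_left]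
  ring

set_option maxHeartbeats 2000000 in
theorem key_series {ρ x y : ℝ} (hρ0 : 0 < ρ) (hρ1 : ρ < 1) (hx : 0 ≤ x) (hy : 0 ≤ y) :
    ∑' k, (1-ρ) * ρ^k * ((1 - ee k x) * (1 - ee k y))
      = 1 - Real.exp (-((1-ρ)*x)) * (∑' k, Real.exp (-y) * (y^k/k.factorial) * ee k (ρ*x))
          - Real.exp (-((1-ρ)*y)) *
              (1 - ∑' k, Real.exp (-(ρ*y)) * ((ρ*y)^k/k.factorial) * ee k x) := by
  have hρ0' : (0:ℝ) ≤ ρ := hρ0.le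
  have h1ρ : (0:ℝ) < 1 - ρ := by linarith
  have hρx : (0:ℝ) ≤ ρ*x := by positivity
  have hρy : (0:ℝ) ≤ ρ*y := by positivity
  have sg : Summable fun k : ℕ => ρ^k := summable_geometric_of_lt_one hρ0' hρ1
  have sx : Summable fun k => ρ^k * ee k x := by
    apply Summable.of_nonneg_of_le (fun k => mul_nonneg (by positivity) (ee_nonneg k hx))
      (fun k => ?_) sg
    calc ρ^k * ee k x ≤ ρ^k * 1 := mul_le_mul_of_nonneg_left (ee_le_one k hx) (by positivity)
      _ = ρ^k := mul_one _
  have sy : Summable fun k => ρ^k * ee k y := by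
    apply Summable.of_nonneg_of_le (fun k => mul_nonneg (by positivity) (ee_nonneg k hy))
      (fun k => ?_) sg
    calc ρ^k * ee k y ≤ ρ^k * 1 := mul_le_mul_of_nonneg_left (ee_le_one k hy) (by positivity)
      _ = ρ^k := mul_one _
  have sxy : Summable fun k => ρ^k * (ee k x * ee k y) := by
    apply Summable.of_nonneg_of_le (fun k => mul_nonneg (by positivity)
      (mul_nonneg (ee_nonneg k hx) (ee_nonneg k hy))) (fun k => ?_) sg
    calc ρ^k * (ee k x * ee k y) ≤ ρ^k * 1 := by
          apply mul_le_mul_of_nonneg_left _ (by positivity)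
          calc ee k x * ee k y ≤ 1 * 1 :=
                mul_le_mul (ee_le_one k hx) (ee_le_one k hy) (ee_nonneg k hy) zero_le_one
            _ = 1 := mul_one _
      _ = ρ^k := mul_one _
  -- split the left side
  have hsplit : ∀ k : ℕ, (1-ρ) * ρ^k * ((1 - ee k x) * (1 - ee k y))
      = (1-ρ) * (ρ^k - (ρ^k * ee k x + (ρ^k * ee k y - ρ^k * (ee k x * ee k y)))) :=
    fun k => by ring
  rw [tsum_congr hsplit, tsum_mul_left, Summable.tsum_sub sg ((sx.add (sy.sub sxy))),
    Summable.tsum_add sx (sy.sub sxy), Summable.tsum_sub sy sxy,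
    tsum_geometric_of_lt_one hρ0' hρ1, sum_geom_ee hρ0' hρ1 hx, sum_geom_ee hρ0' hρ1 hy,
    shape3 hρ0' hρ1 hx hy]
  -- expand the two Marcum-type sums
  have hM1 : (∑' k, Real.exp (-y) * (y^k/k.factorial) * ee k (ρ*x))
      = Real.exp (-(ρ*x)) * (Real.exp (-y) *
          ∑' p : ℕ×ℕ, (if p.1 ≤ p.2 then (ρ*x)^p.1/p.1.factorial * (y^p.2/p.2.factorial) else 0)) := by
    have h := shape2 (g := fun k => Real.exp (-y) * (y^k/k.factorial))
      (fun k => by positivity) ((Real.summable_pow_div_factorial y).mul_left _) hρx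
    rw [h]
    congr 1
    rw [← tsum_mul_left]
    apply tsum_congr
    intro p
    by_cases h : p.1 ≤ p.2
    · rw [if_pos h, if_pos h]; ring
    · rw [if_neg h, if_neg h]; ring
  have hM2 : (∑' k, Real.exp (-(ρ*y)) * ((ρ*y)^k/k.factorial) * ee k x)
      = Real.exp (-x) * (Real.exp (-(ρ*y)) *
          ∑' p : ℕ×ℕ, (if p.1 ≤ p.2 then x^p.1/p.1.factorial * ((ρ*y)^p.2/p.2.factorial) else 0)) := by
    have h := shape2 (g := fun k => Real.exp (-(ρ*y)) * ((ρ*y)^k/k.factorial))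
      (fun k => by positivity) ((Real.summable_pow_div_factorial (ρ*y)).mul_left _) hx
    rw [h]
    congr 1
    rw [← tsum_mul_left]
    apply tsum_congr
    intro p
    by_cases h : p.1 ≤ p.2
    · rw [if_pos h, if_pos h]; ring
    · rw [if_neg h, if_neg h]; ring
  rw [hM1, hM2]
  -- the combinatorial identity between the three double sums
  have sP2 : Summable (fun p : ℕ×ℕ => (ρ*x)^p.1/p.1.factorial * (y^p.2/p.2.factorial)) :=
    (Real.summable_pow_div_factorial (ρ*x)).mul_of_nonneg
      (Real.summable_pow_div_factorial y) (fun k => by positivity) (fun k => by positivity)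
  have sP3 : Summable (fun p : ℕ×ℕ =>
      if p.1 ≤ p.2 then (ρ*x)^p.1/p.1.factorial * (y^p.2/p.2.factorial) else 0) := by
    apply Summable.of_nonneg_of_le (fun p => ?_) (fun p => ?_) sP2
    · by_cases h : p.1 ≤ p.2
      · rw [if_pos h]; positivity
      · rw [if_neg h]
    · by_cases h : p.1 ≤ p.2
      · rw [if_pos h]
      · rw [if_neg h]; positivity
  have sP4 : Summable (fun p : ℕ×ℕ =>
      if p.1 ≤ p.2 then x^p.1/p.1.factorial * ((ρ*y)^p.2/p.2.factorial) else 0) := by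
    apply Summable.of_nonneg_of_le (fun p => ?_) (fun p => ?_)
      ((Real.summable_pow_div_factorial x).mul_of_nonneg
        (Real.summable_pow_div_factorial (ρ*y)) (fun k => by positivity) (fun k => by positivity))
    · by_cases h : p.1 ≤ p.2
      · rw [if_pos h]; positivity
      · rw [if_neg h]
    · by_cases h : p.1 ≤ p.2
      · rw [if_pos h]
      · rw [if_neg h]; positivity
  have hpw : ∀ p : ℕ×ℕ, ρ^(max p.1 p.2) * (x^p.1/p.1.factorial * (y^p.2/p.2.factorial))
      = ((ρ*x)^p.1/p.1.factorial * (y^p.2/p.2.factorial)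
          - (if p.1 ≤ p.2 then (ρ*x)^p.1/p.1.factorial * (y^p.2/p.2.factorial) else 0))
        + (if p.1 ≤ p.2 then x^p.1/p.1.factorial * ((ρ*y)^p.2/p.2.factorial) else 0) := by
    intro p
    by_cases h : p.1 ≤ p.2
    · rw [if_pos h, if_pos h, max_eq_right h, mul_pow]
      ring
    · rw [if_neg h, if_neg h, max_eq_left (by omega), mul_pow]
      ring
  have claim : (∑' p : ℕ×ℕ, ρ^(max p.1 p.2) * (x^p.1/p.1.factorial * (y^p.2/p.2.factorial)))
      = (Real.exp (ρ*x) * Real.exp y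
          - ∑' p : ℕ×ℕ, (if p.1 ≤ p.2 then (ρ*x)^p.1/p.1.factorial * (y^p.2/p.2.factorial) else 0))
        + ∑' p : ℕ×ℕ, (if p.1 ≤ p.2 then x^p.1/p.1.factorial * ((ρ*y)^p.2/p.2.factorial) else 0) := by
    rw [tsum_congr hpw, Summable.tsum_add (sP2.sub sP3) sP4, Summable.tsum_sub sP2 sP3]
    congr 2
    rw [exp_tsum (ρ*x), exp_tsum y]
    exact (Summable.tsum_mul_tsum (Real.summable_pow_div_factorial (ρ*x))
      (Real.summable_pow_div_factorial y) sP2).symm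
  rw [claim]
  -- now pure exponential algebra
  have e1 : Real.exp (-((1-ρ)*x)) = (Real.exp x)⁻¹ * Real.exp (ρ*x) := by
    rw [← Real.exp_neg, ← Real.exp_add]; congr 1; ring
  have e2 : Real.exp (-((1-ρ)*y)) = (Real.exp y)⁻¹ * Real.exp (ρ*y) := by
    rw [← Real.exp_neg, ← Real.exp_add]; congr 1; ring
  rw [e1, e2, Real.exp_neg x, Real.exp_neg y, Real.exp_neg (ρ*x), Real.exp_neg (ρ*y)]
  have h1 := Real.exp_ne_zero x
  have h2 := Real.exp_ne_zero y
  have h3 := Real.exp_ne_zero (ρ*x)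
  have h4 := Real.exp_ne_zero (ρ*y)
  have h5 : (1:ℝ) - ρ ≠ 0 := ne_of_gt h1ρ
  field_simp
  ring

theorem bivariate_rayleigh_cdf (Ω₁ Ω₂ : ℝ) (hΩ₁ : 0 < Ω₁) (hΩ₂ : 0 < Ω₂)
    (ρ : ℝ) (hρ : ρ ∈ Set.Ioo (0 : ℝ) 1) (r₁ r₂ : ℝ) (h₁ : 0 ≤ r₁) (h₂ : 0 ≤ r₂) :
    (∫ x in (0:ℝ)..r₁, ∫ y in (0:ℝ)..r₂, nakPDF 1 Ω₁ Ω₂ ρ x y) =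
      1 - Real.exp (-r₁ ^ 2 / Ω₁) *
            marcumQ 1 (Real.sqrt (2 / (1 - ρ)) * (r₂ / Real.sqrt Ω₂))
              (Real.sqrt (2 * ρ / (1 - ρ)) * (r₁ / Real.sqrt Ω₁)) -
        Real.exp (-r₂ ^ 2 / Ω₂) *
          (1 - marcumQ 1 (Real.sqrt (2 * ρ / (1 - ρ)) * (r₂ / Real.sqrt Ω₂))
              (Real.sqrt (2 / (1 - ρ)) * (r₁ / Real.sqrt Ω₁))) := by
  obtain ⟨hρ0, hρ1⟩ := hρ
  have h1ρ : (0:ℝ) < 1 - ρ := by linarith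
  have h1ρ' : (1:ℝ) - ρ ≠ 0 := ne_of_gt h1ρ
  have hΩ₁' : Ω₁ ≠ 0 := ne_of_gt hΩ₁
  have hΩ₂' : Ω₂ ≠ 0 := ne_of_gt hΩ₂
  set x := 1/((1-ρ)*Ω₁) * r₁^2 with hxdef
  set y := 1/((1-ρ)*Ω₂) * r₂^2 with hydef
  have hx : 0 ≤ x := by rw [hxdef]; positivity
  have hy : 0 ≤ y := by rw [hydef]; positivity
  rw [double_integral_series Ω₁ Ω₂ hΩ₁ hΩ₂ ρ ⟨hρ0, hρ1⟩ r₁ r₂ h₁ h₂,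
    key_series hρ0 hρ1 hx hy]
  have ha1 : 0 ≤ Real.sqrt (2/(1-ρ)) * (r₂/Real.sqrt Ω₂) := by positivity
  have hb1 : 0 ≤ Real.sqrt (2*ρ/(1-ρ)) * (r₁/Real.sqrt Ω₁) := by positivity
  have ha2 : 0 ≤ Real.sqrt (2*ρ/(1-ρ)) * (r₂/Real.sqrt Ω₂) := by positivity
  have hb2 : 0 ≤ Real.sqrt (2/(1-ρ)) * (r₁/Real.sqrt Ω₁) := by positivity
  rw [marcumQ_one_series ha1 hb1, marcumQ_one_series ha2 hb2]
  have hsq1 : Real.sqrt (2/(1-ρ)) ^ 2 = 2/(1-ρ) := Real.sq_sqrt (by positivity)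
  have hsq2 : Real.sqrt (2*ρ/(1-ρ)) ^ 2 = 2*ρ/(1-ρ) := Real.sq_sqrt (by positivity)
  have hso1 : Real.sqrt Ω₁ ^ 2 = Ω₁ := Real.sq_sqrt hΩ₁.le
  have hso2 : Real.sqrt Ω₂ ^ 2 = Ω₂ := Real.sq_sqrt hΩ₂.le
  have q1 : (Real.sqrt (2/(1-ρ)) * (r₂/Real.sqrt Ω₂))^2/2 = y := by
    rw [mul_pow, div_pow, hsq1, hso2, hydef]
    field_simp
  have q2 : (Real.sqrt (2*ρ/(1-ρ)) * (r₁/Real.sqrt Ω₁))^2/2 = ρ * x := by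
    rw [mul_pow, div_pow, hsq2, hso1, hxdef]
    field_simp
  have q3 : (Real.sqrt (2*ρ/(1-ρ)) * (r₂/Real.sqrt Ω₂))^2/2 = ρ * y := by
    rw [mul_pow, div_pow, hsq2, hso2, hydef]
    field_simp
  have q4 : (Real.sqrt (2/(1-ρ)) * (r₁/Real.sqrt Ω₁))^2/2 = x := by
    rw [mul_pow, div_pow, hsq1, hso1, hxdef]
    field_simp
  rw [q1, q2, q3, q4,
    show -r₁^2/Ω₁ = -((1-ρ)*x) by rw [hxdef]; field_simp,
    show -r₂^2/Ω₂ = -((1-ρ)*y) by rw [hydef]; field_simp]
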